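/- Let n > r ≥ 1, s ≥ 1, μ ≥ 2 and d with n − r < d ≤ n − 1 be integers, set b = d + 1 − n + r and ξ = max{n·b, μ}. If 2s(r+1) + r ≤ n, then 2·n·b·(2·n·μ)^{s(r+1)−1} < ξ^{n−r}. -/

import Mathlib

theorem stmt_11 (n r s μ d : ℕ) (hr : 1 ≤ r) (hrn : r < n) (hs : 1 ≤ s) (hμ : 2 ≤ μ)
    (hd1 : n - r < d) (hd2 : d ≤ n - 1)
    (b ξ : ℕ) (hb : b = d + 1 - (n - r)) (hξ : ξ = max (n * b) μ)
    (hcond : 2 * s * (r + 1) + r ≤ n) :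
    2 * n * b * (2 * n * μ) ^ (s * (r + 1) - 1) < ξ ^ (n - r) := by
  have hb2 : 2 ≤ b := by omega
  have hn2 : 2 ≤ n := by omega
  have hnb : 4 ≤ n * b := by nlinarith
  have hξnb : n * b ≤ ξ := by rw [hξ]; exact le_max_left _ _
  have hξμ : μ ≤ ξ := by rw [hξ]; exact le_max_right _ _
  have h1 : 2 * n * b < ξ ^ 2 := by
    have : 2 * (n * b) < (n * b) * (n * b) := by nlinarith
    calc 2 * n * b = 2 * (n * b) := by ring
      _ < (n * b) * (n * b) := this
      _ ≤ ξ * ξ := Nat.mul_le_mul hξnb hξnb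
      _ = ξ ^ 2 := (sq ξ).symm
  have h2 : 2 * n * μ ≤ ξ ^ 2 := by
    have h2n : 2 * n ≤ n * b := by nlinarith
    calc 2 * n * μ ≤ (n * b) * μ := Nat.mul_le_mul_right _ h2n
      _ ≤ ξ * ξ := Nat.mul_le_mul (le_trans hξnb (le_refl _)) hξμ
      _ = ξ ^ 2 := (sq ξ).symm
  set t := s * (r + 1) with ht
  have ht1 : 1 ≤ t := Nat.one_le_iff_ne_zero.mpr (by positivity)
  have hcond' : 2 * t + r ≤ n := by
    calc 2 * t + r = 2 * s * (r + 1) + r := by rw [ht]; ring_nf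
      _ ≤ n := hcond
  have hξ1 : 1 ≤ ξ := by omega
  calc 2 * n * b * (2 * n * μ) ^ (t - 1)
      < ξ ^ 2 * (ξ ^ 2) ^ (t - 1) :=
        Nat.mul_lt_mul_of_lt_of_le h1 (Nat.pow_le_pow_left h2 _) (by positivity)
    _ = ξ ^ (2 + 2 * (t - 1)) := by rw [← pow_mul, ← pow_add]
    _ ≤ ξ ^ (n - r) := Nat.pow_le_pow_right hξ1 (by omega)
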